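/- Let k be a field of characteristic zero with algebraic closure k̄, A = k[X₁,...,Xₙ], A_{k̄} = k̄[X₁,...,Xₙ]. Let 𝔪₁,...,𝔪_r be distinct maximal ideals of A_{k̄} and 𝔍₁,...,𝔍_r ideals with √𝔍ᵢ = 𝔪ᵢ. Let Σ be a lower ℤ≥0-saturated subset of ℤ≥0^n such that ∂_γ(𝔍₁⋯𝔍_r) ⊆ 𝔪₁⋯𝔪_r for all γ ∈ Σ. Then for each i and each γ ∈ Σ, ∂_γ(𝔍ᵢ) ⊆ 𝔪ᵢ. -/

import Mathlib

/-- The normalized (Hasse) differential operator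
`∂_γ = (1/(γ₁!⋯γₙ!)) ∂^{|γ|}/∂X₁^{γ₁}⋯∂Xₙ^{γₙ}` on `k[X₁,…,Xₙ]`. -/
noncomputable def nPD {k : Type*} [Field k] {n : ℕ} (γ : Fin n → ℕ)
    (f : MvPolynomial (Fin n) k) : MvPolynomial (Fin n) k :=
  ((∏ i, (γ i).factorial : ℕ) : k)⁻¹ •
    (List.finRange n).foldr (fun i g => (fun h => MvPolynomial.pderiv i h)^[γ i] g) f

/-- A set of exponents (as finitely supported functions) is lower `ℤ≥0`-saturated if it
contains `0` and is downward closed componentwise. -/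
def lowerSatF {n : ℕ} (S : Set (Fin n →₀ ℕ)) : Prop :=
  0 ∈ S ∧ ∀ γ ∈ S, ∀ δ : Fin n →₀ ℕ, δ ≤ γ → δ ∈ S

namespace Stmt9Aux

open MvPolynomial

variable {K : Type*} [Field K] {n : ℕ}

lemma pderiv_comm (i j : Fin n) (f : MvPolynomial (Fin n) K) :
    pderiv i (pderiv j f) = pderiv j (pderiv i f) := by
  induction f using MvPolynomial.induction_on' with
  | add p q hp hq => simp [hp, hq]
  | monomial s a =>
    rcases eq_or_ne i j with rfl | hij
    · rfl
    · simp only [pderiv_monomial]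
      rw [Finsupp.tsub_apply, Finsupp.tsub_apply,
        Finsupp.single_apply_eq_zero.2 (fun h => absurd h.symm hij),
        Finsupp.single_apply_eq_zero.2 (fun h => absurd h hij)]
      rw [tsub_zero, tsub_zero, tsub_right_comm]
      ring_nf

/-- unnormalized iterated partial derivatives along a list of variables -/
noncomputable def FD (L : List (Fin n)) (γ : Fin n → ℕ) (f : MvPolynomial (Fin n) K) :
    MvPolynomial (Fin n) K :=
  L.foldr (fun i g => (fun h => pderiv i h)^[γ i] g) f

lemma FD_nil (γ : Fin n → ℕ) (f : MvPolynomial (Fin n) K) : FD [] γ f = f := rfl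

lemma FD_cons (j : Fin n) (L : List (Fin n)) (γ : Fin n → ℕ) (f : MvPolynomial (Fin n) K) :
    FD (j :: L) γ f = (fun h => pderiv j h)^[γ j] (FD L γ f) := rfl

lemma iterate_pderiv_comm (i j : Fin n) (m : ℕ) (f : MvPolynomial (Fin n) K) :
    pderiv i ((fun h => pderiv j h)^[m] f) = (fun h => pderiv j h)^[m] (pderiv i f) := by
  induction m generalizing f with
  | zero => rfl
  | succ m ih =>
    rw [Function.iterate_succ_apply, Function.iterate_succ_apply, ih, pderiv_comm]

lemma FD_congr (L : List (Fin n)) {γ δ : Fin n → ℕ} (h : ∀ j ∈ L, γ j = δ j)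
    (f : MvPolynomial (Fin n) K) : FD L γ f = FD L δ f := by
  induction L with
  | nil => rfl
  | cons j t ih =>
    rw [FD_cons, FD_cons, ih (fun x hx => h x (List.mem_cons_of_mem _ hx)),
      h j List.mem_cons_self]

lemma FD_succ {i : Fin n} {L : List (Fin n)} (hL : i ∈ L) (hnd : L.Nodup)
    (γ : Fin n → ℕ) (f : MvPolynomial (Fin n) K) :
    FD L (Function.update γ i (γ i + 1)) f = pderiv i (FD L γ f) := by
  induction L with
  | nil => simp at hL
  | cons j t ih =>
    rcases List.nodup_cons.1 hnd with ⟨hjt, hndt⟩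
    rcases eq_or_ne j i with rfl | hji
    · have ht : FD t (Function.update γ j (γ j + 1)) f = FD t γ f :=
        FD_congr t (fun x hx => Function.update_of_ne (fun h => hjt (by rw [← h]; exact hx)) _ _) f
      rw [FD_cons, FD_cons, ht, Function.update_self, Function.iterate_succ_apply']
    · have hit : i ∈ t := by
        rcases List.mem_cons.1 hL with h | h
        · exact absurd h.symm hji
        · exact h
      rw [FD_cons, FD_cons, Function.update_of_ne hji, ih hit hndt,
        iterate_pderiv_comm]

lemma nPD_eq_FD (γ : Fin n → ℕ) (f : MvPolynomial (Fin n) K) :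
    nPD γ f = ((∏ i, (γ i).factorial : ℕ) : K)⁻¹ • FD (List.finRange n) γ f := rfl

lemma FD_zero (L : List (Fin n)) (f : MvPolynomial (Fin n) K) :
    FD L (fun _ => 0) f = f := by
  induction L with
  | nil => rfl
  | cons j t ih => rw [FD_cons]; exact ih

lemma nPD_zero (f : MvPolynomial (Fin n) K) : nPD (fun _ => (0:ℕ)) f = f := by
  rw [nPD_eq_FD]
  have : FD (List.finRange n) (fun _ => (0:ℕ)) f = f := by
    induction (List.finRange n) with
    | nil => rfl
    | cons j t ih => rw [FD_cons]; exact ih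
  rw [this]
  simp

lemma coe_add_single (γ : Fin n →₀ ℕ) (i : Fin n) :
    ((γ + Finsupp.single i 1 : Fin n →₀ ℕ) : Fin n → ℕ) = Function.update (⇑γ) i (γ i + 1) := by
  funext j
  rcases eq_or_ne j i with rfl | hj
  · simp
  · simp [Finsupp.single_apply, Function.update_of_ne hj, Ne.symm hj]

lemma nPD_rec (γ : Fin n →₀ ℕ) (i : Fin n) (f : MvPolynomial (Fin n) K) :
    nPD ((γ + Finsupp.single i 1 : Fin n →₀ ℕ) : Fin n → ℕ) f = ((γ i + 1 : ℕ) : K)⁻¹ • pderiv i (nPD ⇑γ f) := by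
  rw [nPD_eq_FD, nPD_eq_FD, coe_add_single]
  have hprod : (∏ j, ((Function.update (⇑γ) i (γ i + 1)) j).factorial)
      = (γ i + 1) * ∏ j, (γ j).factorial := by
    rw [← Finset.mul_prod_erase Finset.univ _ (Finset.mem_univ i),
      ← Finset.mul_prod_erase Finset.univ (fun j => (γ j).factorial) (Finset.mem_univ i),
      Finset.prod_congr rfl
        (fun j hj => by rw [Function.update_of_ne (Finset.ne_of_mem_erase hj)]),
      Function.update_self, Nat.factorial_succ, mul_assoc]
  rw [hprod, FD_succ (List.mem_finRange i) (List.nodup_finRange n)]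
  rw [Derivation.map_smul, smul_smul]
  push_cast
  rw [mul_inv]

lemma pderiv_nPD (γ : Fin n →₀ ℕ) (i : Fin n) (f : MvPolynomial (Fin n) K) [CharZero K] :
    pderiv i (nPD ⇑γ f) = ((γ i + 1 : ℕ) : K) • nPD ((γ + Finsupp.single i 1 : Fin n →₀ ℕ) : Fin n → ℕ) f := by
  rw [nPD_rec, smul_smul, mul_inv_cancel₀ (Nat.cast_ne_zero.2 (Nat.succ_ne_zero _)), one_smul]

/-- The ideal generated by the Hasse derivatives of `f` of order strictly less than `γ`. -/
noncomputable def Idl (f : MvPolynomial (Fin n) K) (γ : Fin n →₀ ℕ) :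
    Ideal (MvPolynomial (Fin n) K) :=
  Ideal.span ((fun δ : Fin n →₀ ℕ => nPD ⇑δ f) '' {δ | δ < γ})

lemma smul_mem_Idl (f : MvPolynomial (Fin n) K) (γ : Fin n →₀ ℕ) (c : K)
    {x : MvPolynomial (Fin n) K} (hx : x ∈ Idl f γ) : c • x ∈ Idl f γ := by
  rw [smul_eq_C_mul]
  exact Ideal.mul_mem_left _ _ hx

lemma nPD_mem_Idl (f : MvPolynomial (Fin n) K) {γ δ : Fin n →₀ ℕ} (h : δ < γ) :
    nPD ⇑δ f ∈ Idl f γ :=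
  Ideal.subset_span ⟨δ, h, rfl⟩

lemma add_single_lt_add_single {γ δ : Fin n →₀ ℕ} (h : δ < γ) (i : Fin n) :
    δ + Finsupp.single i 1 < γ + Finsupp.single i 1 := by
  refine lt_of_le_of_ne (add_le_add h.le le_rfl) ?_
  intro hc
  exact h.ne (add_right_cancel hc)

lemma Idl_mono (f : MvPolynomial (Fin n) K) {γ δ : Fin n →₀ ℕ} (h : δ ≤ γ) :
    Idl f δ ≤ Idl f γ :=
  Ideal.span_mono (Set.image_mono fun _ hx => lt_of_lt_of_le hx h)

lemma pderiv_Idl [CharZero K] (f : MvPolynomial (Fin n) K) (i : Fin n) (γ' : Fin n →₀ ℕ)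
    {x : MvPolynomial (Fin n) K} (hx : x ∈ Idl f γ') :
    x ∈ Idl f (γ' + Finsupp.single i 1) ∧
      pderiv i x ∈ Idl f (γ' + Finsupp.single i 1) := by
  induction hx using Submodule.span_induction with
  | mem x hgen =>
    obtain ⟨δ, hδ, rfl⟩ := hgen
    constructor
    · exact nPD_mem_Idl f (lt_of_lt_of_le hδ le_self_add)
    · rw [pderiv_nPD]
      exact smul_mem_Idl f _ _ (nPD_mem_Idl f (add_single_lt_add_single hδ i))
  | zero => simp
  | add x y hx hy ihx ihy =>
    exact ⟨Ideal.add_mem _ ihx.1 ihy.1, by rw [map_add]; exact Ideal.add_mem _ ihx.2 ihy.2⟩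
  | smul r x hx ih =>
    refine ⟨?_, ?_⟩
    · rw [smul_eq_mul]; exact Ideal.mul_mem_left _ _ ih.1
    · rw [smul_eq_mul, pderiv_mul]
      exact Ideal.add_mem _ (Ideal.mul_mem_left _ _ ih.1) (Ideal.mul_mem_left _ _ ih.2)

lemma sum_lt_sum_of_lt {γ δ : Fin n →₀ ℕ} (h : δ < γ) : ∑ j, δ j < ∑ j, γ j := by
  have hle : ∀ j, δ j ≤ γ j := fun j => h.le j
  have hne : ∃ j, δ j ≠ γ j := by
    by_contra hc
    push_neg at hc
    exact h.ne (Finsupp.ext hc)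
  obtain ⟨j, hj⟩ := hne
  exact Finset.sum_lt_sum (fun j _ => hle j)
    ⟨j, Finset.mem_univ j, lt_of_le_of_ne (hle j) hj⟩

lemma leibniz_err [CharZero K] (f g : MvPolynomial (Fin n) K) (γ : Fin n →₀ ℕ) :
    nPD ⇑γ (f * g) - nPD ⇑γ f * g ∈ Idl f γ := by
  suffices H : ∀ d (γ : Fin n →₀ ℕ), (∑ j, γ j) = d →
      nPD ⇑γ (f * g) - nPD ⇑γ f * g ∈ Idl f γ from H _ γ rfl
  intro d
  induction d using Nat.strong_induction_on with
  | _ d IH =>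
    intro γ hγd
    rcases eq_or_ne γ 0 with rfl | hγ0
    · have hz : ⇑(0 : Fin n →₀ ℕ) = (fun _ => (0:ℕ)) := rfl
      rw [hz, nPD_zero, nPD_zero, sub_self]
      exact Ideal.zero_mem _
    · obtain ⟨i, hi⟩ : ∃ i, γ i ≠ 0 := by
        by_contra hc
        push_neg at hc
        exact hγ0 (Finsupp.ext hc)
      set γ' : Fin n →₀ ℕ := γ - Finsupp.single i 1 with hγ'
      have hγ'e : γ' + Finsupp.single i 1 = γ :=
        tsub_add_cancel_of_le (Finsupp.single_le_iff.2 (Nat.one_le_iff_ne_zero.2 hi))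
      have hγ'i : γ' i + 1 = γ i := by
        have := DFunLike.congr_fun hγ'e i
        simpa using this
      have hγ'lt : γ' < γ := by
        refine lt_of_le_of_ne tsub_le_self ?_
        intro hc
        rw [hc] at hγ'i
        omega
      have hsum : ∑ j, γ' j < d := hγd ▸ sum_lt_sum_of_lt hγ'lt
      have IH' := IH _ hsum γ' rfl
      set E' : MvPolynomial (Fin n) K := nPD ⇑γ' (f * g) - nPD ⇑γ' f * g with hE'
      have hmem := pderiv_Idl f i γ' IH'
      rw [hγ'e] at hmem
      set c : K := ((γ' i + 1 : ℕ) : K) with hc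
      have hc0 : c ≠ 0 := Nat.cast_ne_zero.2 (Nat.succ_ne_zero _)
      have e1 : nPD ⇑γ (f * g) = c⁻¹ • pderiv i (nPD ⇑γ' (f * g)) := by
        rw [← hγ'e, nPD_rec]
      have e2 : pderiv i (nPD ⇑γ' f) = c • nPD ⇑γ f := by
        conv_lhs => rw [pderiv_nPD]
        rw [hγ'e]
      have e3 : nPD ⇑γ' (f * g) = nPD ⇑γ' f * g + E' := by rw [hE']; ring
      have key : nPD ⇑γ (f * g) - nPD ⇑γ f * g
          = c⁻¹ • (nPD ⇑γ' f * pderiv i g) + c⁻¹ • pderiv i E' := by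
        rw [e1, e3, map_add, pderiv_mul, e2, smul_add, smul_add, smul_mul_assoc,
          inv_smul_smul₀ hc0]
        abel
      rw [key]
      refine Ideal.add_mem _ ?_ ?_
      · exact smul_mem_Idl f γ _
          (Ideal.mul_mem_right _ _ (nPD_mem_Idl f hγ'lt))
      · exact smul_mem_Idl f γ _ hmem.2

end Stmt9Aux

open Stmt9Aux

/-- Over the algebraic closure `k̄` of a char-0 field `k`, let
`𝔪₁,…,𝔪_r` be distinct maximal ideals of `k̄[X₁,…,Xₙ]` and `𝔍ᵢ` ideals with
`√𝔍ᵢ = 𝔪ᵢ`. If `Σ` is lower `ℤ≥0`-saturated and `∂_γ(𝔍₁⋯𝔍_r) ⊆ 𝔪₁⋯𝔪_r` for all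
`γ ∈ Σ`, then `∂_γ(𝔍ᵢ) ⊆ 𝔪ᵢ` for all `i` and `γ ∈ Σ`. -/
theorem stmt9 {k : Type*} [Field k] [CharZero k] {n r : ℕ}
    (m J : Fin r → Ideal (MvPolynomial (Fin n) (AlgebraicClosure k)))
    (hmax : ∀ i, (m i).IsMaximal) (hdist : Function.Injective m)
    (hrad : ∀ i, (J i).radical = m i)
    (S : Set (Fin n →₀ ℕ)) (hS : lowerSatF S)
    (hD : ∀ γ ∈ S, ∀ f ∈ ∏ i, J i, nPD ⇑γ f ∈ ∏ i, m i) :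
    ∀ i, ∀ γ ∈ S, ∀ f ∈ J i, nPD ⇑γ f ∈ m i := by
  intro i
  haveI hpr : (m i).IsPrime := (hmax i).isPrime
  -- choose elements of J j outside m i for j ≠ i
  have hsel : ∀ j : Fin r, ∃ p, p ∈ J j ∧ (j ≠ i → p ∉ m i) := by
    intro j
    rcases eq_or_ne j i with rfl | hji
    · exact ⟨0, (J j).zero_mem, fun h => absurd rfl h⟩
    · have hnotle : ¬ J j ≤ m i := by
        intro hle
        have h1 : (J j).radical ≤ (m i).radical := Ideal.radical_mono hle
        rw [hrad j, hpr.radical] at h1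
        exact hji (hdist ((hmax j).eq_of_le (hmax i).ne_top h1))
      obtain ⟨p, hp1, hp2⟩ := SetLike.not_le_iff_exists.1 hnotle
      exact ⟨p, hp1, fun _ => hp2⟩
  choose F hF1 hF2 using hsel
  set g : MvPolynomial (Fin n) (AlgebraicClosure k) :=
    ∏ j ∈ Finset.univ.erase i, F j with hg
  have hgJ : g ∈ ∏ j ∈ Finset.univ.erase i, J j :=
    Ideal.prod_mem_prod fun j _ => hF1 j
  have hgm : g ∉ m i := by
    intro hmem
    obtain ⟨j, hj, hjm⟩ := Ideal.IsPrime.prod_mem_iff.1 hmem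
    exact hF2 j (Finset.ne_of_mem_erase hj) hjm
  have hfg : ∀ f ∈ J i, f * g ∈ ∏ j, J j := by
    intro f hf
    rw [← Finset.mul_prod_erase Finset.univ J (Finset.mem_univ i)]
    exact Ideal.mul_mem_mul hf hgJ
  have hprodm : (∏ j, m j) ≤ m i := by
    rw [← Finset.mul_prod_erase Finset.univ m (Finset.mem_univ i)]
    exact Ideal.mul_le_left
  suffices H : ∀ d (γ : Fin n →₀ ℕ), γ ∈ S → (∑ j, γ j) = d →
      ∀ f ∈ J i, nPD ⇑γ f ∈ m i by
    intro γ hγ f hf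
    exact H _ γ hγ rfl f hf
  intro d
  induction d using Nat.strong_induction_on with
  | _ d IH =>
    intro γ hγS hγd f hf
    have h1 : nPD ⇑γ (f * g) ∈ m i := hprodm (hD γ hγS _ (hfg f hf))
    have h2 := leibniz_err f g γ
    have h3 : Idl f γ ≤ m i := by
      rw [Idl, Ideal.span_le]
      rintro x ⟨δ, hδ, rfl⟩
      exact IH _ (hγd ▸ sum_lt_sum_of_lt hδ) δ (hS.2 γ hγS δ hδ.le) rfl f hf
    have h4 : nPD ⇑γ f * g ∈ m i := by
      have : nPD ⇑γ f * g = nPD ⇑γ (f * g) - (nPD ⇑γ (f * g) - nPD ⇑γ f * g) := by ring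
      rw [this]
      exact Ideal.sub_mem _ h1 (h3 h2)
    rcases hpr.mem_or_mem h4 with h | h
    · exact h
    · exact absurd h hgm
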